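/- Let k ≥ 1 be an integer and m, n nonnegative integers, and let I_k(m, n) = ∫_{[0,∞)^k} (e₂(x))^m (e₁(x))^n e^{−e₁(x)} dx. Then I_k(m, n + 1) = (2m + n + k) · I_k(m, n). -/

import Mathlib

open MeasureTheory Finset
open scoped Pointwise

/-- `e₁(x) = ∑ᵢ xᵢ` -/
noncomputable def e1 {k : ℕ} (x : Fin k → ℝ) : ℝ := ∑ i, x i

/-- `e₂(x) = ∑_{i<j} xᵢ xⱼ` -/
noncomputable def e2 {k : ℕ} (x : Fin k → ℝ) : ℝ := ∑ i, ∑ j ∈ Finset.Ioi i, x i * x j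

/-- `I_k(m, n) = ∫_{[0,∞)^k} (e₂ x)^m (e₁ x)^n e^{-e₁ x} dx` -/
noncomputable def I (k m n : ℕ) : ℝ :=
  ∫ x : Fin k → ℝ in Set.univ.pi fun _ => Set.Ici (0 : ℝ),
    e2 x ^ m * e1 x ^ n * Real.exp (-(e1 x))

section Aux

lemma e1_cont {k : ℕ} : Continuous (e1 (k := k)) := by
  unfold e1; fun_prop

lemma e2_cont {k : ℕ} : Continuous (e2 (k := k)) := by
  unfold e2; fun_prop

lemma e1_smul {k : ℕ} (c : ℝ) (x : Fin k → ℝ) : e1 (c • x) = c * e1 x := by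
  simp [e1, Finset.mul_sum]

lemma e2_smul {k : ℕ} (c : ℝ) (x : Fin k → ℝ) : e2 (c • x) = c ^ 2 * e2 x := by
  simp only [e2, Finset.mul_sum, Pi.smul_apply, smul_eq_mul]
  refine Finset.sum_congr rfl fun i _ => Finset.sum_congr rfl fun j _ => by ring

lemma e1_nonneg {k : ℕ} {x : Fin k → ℝ} (hx : ∀ i, 0 ≤ x i) : 0 ≤ e1 x :=
  Finset.sum_nonneg fun i _ => hx i

lemma e2_nonneg {k : ℕ} {x : Fin k → ℝ} (hx : ∀ i, 0 ≤ x i) : 0 ≤ e2 x :=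
  Finset.sum_nonneg fun i _ => Finset.sum_nonneg fun j _ => mul_nonneg (hx i) (hx j)

lemma e2_le_sq {k : ℕ} {x : Fin k → ℝ} (hx : ∀ i, 0 ≤ x i) : e2 x ≤ e1 x ^ 2 := by
  have h : e1 x ^ 2 = ∑ i, ∑ j, x i * x j := by
    rw [sq, e1, Finset.sum_mul_sum]
  rw [h, e2]
  refine Finset.sum_le_sum fun i _ => ?_
  exact Finset.sum_le_sum_of_subset_of_nonneg (Finset.subset_univ _) fun j _ _ =>
    mul_nonneg (hx i) (hx j)

lemma bound_aux (D : ℕ) {t : ℝ} (ht : 0 ≤ t) :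
    t ^ D * Real.exp (-(t / 2)) ≤ (D.factorial * 4 ^ D : ℝ) * Real.exp (-(t / 4)) := by
  have h1 : (t / 4) ^ D / D.factorial ≤ Real.exp (t / 4) :=
    Real.pow_div_factorial_le_exp (t / 4) (by positivity) D
  have hfac : (0 : ℝ) < D.factorial := by positivity
  have h2 : t ^ D ≤ (D.factorial * 4 ^ D : ℝ) * Real.exp (t / 4) := by
    have h3 : (t / 4) ^ D ≤ D.factorial * Real.exp (t / 4) := by
      rw [div_le_iff₀ hfac] at h1; linarith [h1]
    have h4 : t ^ D = (t / 4) ^ D * 4 ^ D := by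
      rw [div_pow]; field_simp
    rw [h4]
    calc (t / 4) ^ D * 4 ^ D ≤ (D.factorial * Real.exp (t / 4)) * 4 ^ D :=
          mul_le_mul_of_nonneg_right h3 (by positivity)
      _ = (D.factorial * 4 ^ D : ℝ) * Real.exp (t / 4) := by ring
  calc t ^ D * Real.exp (-(t / 2))
      ≤ ((D.factorial * 4 ^ D : ℝ) * Real.exp (t / 4)) * Real.exp (-(t / 2)) :=
        mul_le_mul_of_nonneg_right h2 (Real.exp_pos _).le
    _ = (D.factorial * 4 ^ D : ℝ) * Real.exp (-(t / 4)) := by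
        rw [mul_assoc, ← Real.exp_add]; ring_nf

lemma integrable_exp_neg_abs_quarter : Integrable (fun x : ℝ => Real.exp (-(|x| / 4))) := by
  have hIoi : IntegrableOn (fun x : ℝ => Real.exp (-(|x| / 4))) (Set.Ici 0) := by
    rw [integrableOn_Ici_iff_integrableOn_Ioi]
    refine ((exp_neg_integrableOn_Ioi 0 (by norm_num : (0:ℝ) < 1/4))).congr_fun ?_ measurableSet_Ioi
    intro x hx
    simp only [abs_of_pos (show (0:ℝ) < x from hx)]
    ring_nf
  have h1 : Integrable ((Set.Ici (0:ℝ)).indicator fun x => Real.exp (-(|x| / 4))) :=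
    (integrable_indicator_iff measurableSet_Ici).2 hIoi
  have h2 : Integrable
      (fun x : ℝ => (Set.Ici (0:ℝ)).indicator (fun y => Real.exp (-(|y| / 4))) (-x)) :=
    h1.comp_neg
  have h3 : Integrable ((Set.Iic (0:ℝ)).indicator fun x => Real.exp (-(|x| / 4))) := by
    refine h2.congr (Filter.Eventually.of_forall fun x => ?_)
    by_cases hx : x ≤ 0
    · simp [Set.indicator_apply, hx, abs_neg, neg_nonneg]
    · simp [Set.indicator_apply, hx, abs_neg, neg_nonneg]
  have h4 : IntegrableOn (fun x : ℝ => Real.exp (-(|x| / 4))) (Set.Iic 0) :=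
    (integrable_indicator_iff measurableSet_Iic).1 h3
  have h5 := h4.union hIoi
  rwa [Set.Iic_union_Ici, integrableOn_univ] at h5

/-- the dominating product function -/
noncomputable def G {k : ℕ} (x : Fin k → ℝ) : ℝ := ∏ i, Real.exp (-(|x i| / 4))

lemma G_integrable {k : ℕ} : Integrable (G (k := k)) :=
  Integrable.fintype_prod (𝕜 := ℝ) fun _ => integrable_exp_neg_abs_quarter

lemma G_nonneg {k : ℕ} (x : Fin k → ℝ) : 0 ≤ G x :=
  Finset.prod_nonneg fun i _ => (Real.exp_pos _).le

/-- Key pointwise bound. -/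
lemma key_bound {k : ℕ} (M p : ℕ) {x : Fin k → ℝ} (hx : ∀ i, 0 ≤ x i) {s : ℝ}
    (hs : 1 / 2 ≤ s) :
    e2 x ^ M * e1 x ^ p * Real.exp (-(s * e1 x)) ≤
      ((2 * M + p).factorial * 4 ^ (2 * M + p) : ℝ) * G x := by
  have he1 : 0 ≤ e1 x := e1_nonneg hx
  have he2 : 0 ≤ e2 x := e2_nonneg hx
  have hGx : Real.exp (-(e1 x / 4)) = G x := by
    rw [G, ← Real.exp_sum]
    congr 1
    rw [e1, Finset.sum_div, ← Finset.sum_neg_distrib]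
    exact Finset.sum_congr rfl fun i _ => by rw [abs_of_nonneg (hx i)]
  have h1 : e2 x ^ M ≤ e1 x ^ (2 * M) := by
    calc e2 x ^ M ≤ (e1 x ^ 2) ^ M := pow_le_pow_left₀ he2 (e2_le_sq hx) M
      _ = e1 x ^ (2 * M) := by rw [← pow_mul, mul_comm]
  have h2 : Real.exp (-(s * e1 x)) ≤ Real.exp (-(e1 x / 2)) := by
    apply Real.exp_le_exp.2
    nlinarith
  calc e2 x ^ M * e1 x ^ p * Real.exp (-(s * e1 x))
      ≤ e1 x ^ (2 * M) * e1 x ^ p * Real.exp (-(e1 x / 2)) := by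
        exact mul_le_mul (mul_le_mul h1 le_rfl (by positivity) (by positivity)) h2
          (Real.exp_pos _).le (by positivity)
    _ = e1 x ^ (2 * M + p) * Real.exp (-(e1 x / 2)) := by rw [pow_add]
    _ ≤ ((2 * M + p).factorial * 4 ^ (2 * M + p) : ℝ) * Real.exp (-(e1 x / 4)) :=
        bound_aux _ he1
    _ = ((2 * M + p).factorial * 4 ^ (2 * M + p) : ℝ) * G x := by rw [hGx]

end Aux

theorem stmt5 (k m n : ℕ) (hk : 1 ≤ k) :
    I k m (n + 1) = (2 * (m : ℝ) + n + k) * I k m n := by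
  classical
  set A : Set (Fin k → ℝ) := Set.univ.pi fun _ => Set.Ici (0 : ℝ) with hA_def
  have hA : MeasurableSet A := MeasurableSet.univ_pi fun _ => measurableSet_Ici
  set d : ℕ := 2 * m + n with hd_def
  -- the family of integrands
  set f : ℝ → (Fin k → ℝ) → ℝ :=
    fun s x => e2 x ^ m * e1 x ^ n * Real.exp (-(s * e1 x)) with hf_def
  set f' : ℝ → (Fin k → ℝ) → ℝ :=
    fun s x => -(e2 x ^ m * e1 x ^ (n + 1) * Real.exp (-(s * e1 x))) with hf'_def
  set J : ℝ → ℝ := fun s => ∫ x in A, f s x with hJ_def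
  have hmemA : ∀ {x : Fin k → ℝ}, x ∈ A → ∀ i, 0 ≤ x i := by
    intro x hx i
    exact hx i (Set.mem_univ i)
  have hf_cont : ∀ s : ℝ, Continuous (f s) := by
    intro s
    exact ((e2_cont.pow m).mul (e1_cont.pow n)).mul
      (((continuous_const.mul e1_cont).neg).rexp)
  have hf'_cont : ∀ s : ℝ, Continuous (f' s) := by
    intro s
    exact (((e2_cont.pow m).mul (e1_cont.pow (n + 1))).mul
      (((continuous_const.mul e1_cont).neg).rexp)).neg
  -- the common bound constant
  set C : ℝ := ((2 * m + (n + 1)).factorial * 4 ^ (2 * m + (n + 1)) : ℝ) with hC_def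
  -- integrability of f s for s ≥ 1/2
  have hint : ∀ s : ℝ, 1 / 2 ≤ s → IntegrableOn (f s) A := by
    intro s hs
    refine Integrable.mono' ((G_integrable.const_mul C).integrableOn)
      ((hf_cont s).aestronglyMeasurable.restrict) ?_
    filter_upwards [ae_restrict_mem hA] with x hx
    have hx0 := hmemA hx
    have h1 : 0 ≤ f s x := by
      refine mul_nonneg (mul_nonneg (pow_nonneg (e2_nonneg hx0) _)
        (pow_nonneg (e1_nonneg hx0) _)) (Real.exp_pos _).le
    rw [Real.norm_eq_abs, abs_of_nonneg h1]
    calc f s x ≤ ((2 * m + n).factorial * 4 ^ (2 * m + n) : ℝ) * G x :=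
          key_bound m n hx0 hs
      _ ≤ C * G x := by
          refine mul_le_mul_of_nonneg_right ?_ (G_nonneg x)
          rw [hC_def]
          have h2 : ((2 * m + n).factorial : ℝ) ≤ ((2 * m + (n + 1)).factorial : ℝ) := by
            exact_mod_cast Nat.factorial_le (by omega)
          have h4 : (4 : ℝ) ^ (2 * m + n) ≤ 4 ^ (2 * m + (n + 1)) :=
            pow_le_pow_right₀ (by norm_num) (by omega)
          exact mul_le_mul h2 h4 (by positivity) (by positivity)
  -- scaling identity : for s > 0, s ^ d * J s = (s ^ k)⁻¹ * J 1
  have hscale : ∀ s : ℝ, 0 < s → J s = s ^ (-(d + k : ℤ)) * J 1 := by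
    intro s hs
    have hsA : s • A = A := by
      ext y
      rw [Set.mem_smul_set_iff_inv_smul_mem₀ hs.ne']
      constructor
      · intro hy i _
        have := hy i (Set.mem_univ i)
        simp only [Pi.smul_apply, smul_eq_mul, Set.mem_Ici] at this
        have : 0 ≤ s⁻¹ * y i := this
        have := mul_nonneg hs.le this
        rwa [← mul_assoc, mul_inv_cancel₀ hs.ne', one_mul] at this
      · intro hy i _
        have := hy i (Set.mem_univ i)
        simp only [Set.mem_Ici] at this
        simp only [Pi.smul_apply, smul_eq_mul, Set.mem_Ici]
        positivity
    have hcv := Measure.setIntegral_comp_smul_of_pos (volume)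
      (fun x => e2 x ^ m * e1 x ^ n * Real.exp (-(e1 x))) A hs
    rw [hsA] at hcv
    have hlhs : ∀ x : Fin k → ℝ,
        e2 (s • x) ^ m * e1 (s • x) ^ n * Real.exp (-(e1 (s • x))) = s ^ d * f s x := by
      intro x
      rw [e1_smul, e2_smul, hf_def, hd_def]
      simp only [mul_pow, ← pow_mul]
      ring_nf
    rw [show (∫ x in A, e2 (s • x) ^ m * e1 (s • x) ^ n * Real.exp (-(e1 (s • x)))) =
        ∫ x in A, s ^ d * f s x from integral_congr_ae
          (Filter.Eventually.of_forall fun x => hlhs x)] at hcv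
    rw [integral_const_mul] at hcv
    have hfin : Module.finrank ℝ (Fin k → ℝ) = k := Module.finrank_fin_fun ℝ
    rw [hfin] at hcv
    have hJ1 : (∫ x in A, e2 x ^ m * e1 x ^ n * Real.exp (-(e1 x))) = J 1 := by
      rw [hJ_def]
      refine integral_congr_ae (Filter.Eventually.of_forall fun x => ?_)
      rw [hf_def]; simp
    rw [hJ1, smul_eq_mul] at hcv
    -- hcv : s ^ d * J s = (s ^ k)⁻¹ * J 1
    have hsd : (0:ℝ) < s ^ d := by positivity
    have hkey : J s = (s ^ d)⁻¹ * ((s ^ k)⁻¹ * J 1) := by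
      have hcv' : s ^ d * J s = (s ^ k)⁻¹ * J 1 := hcv
      field_simp at hcv' ⊢
      linarith [hcv']
    rw [hkey]
    rw [zpow_neg, zpow_add₀ hs.ne', zpow_natCast, zpow_natCast, mul_inv]
    ring
  -- derivative of RHS of the scaling identity at s = 1
  have hderiv_rhs : HasDerivAt J (-((d : ℝ) + k) * J 1) 1 := by
    have h1 := (hasDerivAt_zpow (-(d + k : ℤ)) (1:ℝ) (Or.inl one_ne_zero)).mul_const (J 1)
    have h1' : HasDerivAt (fun s : ℝ => s ^ (-(d + k : ℤ)) * J 1)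
        (-((d : ℝ) + k) * J 1) 1 := by
      refine h1.congr_deriv ?_
      rw [one_zpow]
      push_cast
      ring
    refine h1'.congr_of_eventuallyEq ?_
    filter_upwards [eventually_gt_nhds zero_lt_one] with s hs
    exact hscale s hs
  -- derivative of J at 1 via dominated convergence
  have hball : ∀ s : ℝ, s ∈ Metric.ball (1:ℝ) (1/2) → 1 / 2 ≤ s := by
    intro s hs
    rw [Metric.mem_ball, Real.dist_eq, abs_lt] at hs
    linarith [hs.1]
  have hderiv_lhs : HasDerivAt J (∫ x in A, f' 1 x) 1 := by
    have key := hasDerivAt_integral_of_dominated_loc_of_deriv_le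
      (μ := volume.restrict A) (F := f) (F' := f')
      (bound := fun x => C * G x) (x₀ := (1:ℝ)) (s := Metric.ball (1:ℝ) (1/2)) (Metric.ball_mem_nhds _ (by norm_num))
      (Filter.Eventually.of_forall fun s => (hf_cont s).aestronglyMeasurable.restrict)
      (hint 1 (by norm_num))
      ((hf'_cont 1).aestronglyMeasurable.restrict)
      ?_ ((G_integrable.const_mul C).integrableOn) ?_
    · exact key.2
    · -- bound on the derivative
      filter_upwards [ae_restrict_mem hA] with x hx s hs
      have hx0 := hmemA hx
      have h1 : 0 ≤ e2 x ^ m * e1 x ^ (n + 1) * Real.exp (-(s * e1 x)) :=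
        mul_nonneg (mul_nonneg (pow_nonneg (e2_nonneg hx0) _)
          (pow_nonneg (e1_nonneg hx0) _)) (Real.exp_pos _).le
      rw [hf'_def]
      simp only [Real.norm_eq_abs, abs_neg, abs_of_nonneg h1]
      exact key_bound m (n + 1) hx0 (hball s hs)
    · -- differentiability in s
      filter_upwards [] with x s _
      have hder : HasDerivAt (fun s : ℝ => Real.exp (-(s * e1 x)))
          (Real.exp (-(s * e1 x)) * -(e1 x)) s := by
        have h0 : HasDerivAt (fun s : ℝ => -(s * e1 x)) (-(e1 x)) s :=
          ((hasDerivAt_id s).mul_const (e1 x)).neg.congr_deriv (by simp)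
        exact (Real.hasDerivAt_exp _).comp s h0
      have := hder.const_mul (e2 x ^ m * e1 x ^ n)
      refine this.congr_deriv ?_
      show e2 x ^ m * e1 x ^ n * (Real.exp (-(s * e1 x)) * -e1 x) =
        -(e2 x ^ m * e1 x ^ (n + 1) * Real.exp (-(s * e1 x)))
      rw [pow_succ]; ring
  -- equate the two derivatives
  have heq := hderiv_lhs.unique hderiv_rhs
  have hI1 : (∫ x in A, f' 1 x) = -I k m (n + 1) := by
    rw [I, ← integral_neg]
    refine integral_congr_ae (Filter.Eventually.of_forall fun x => ?_)
    rw [hf'_def]; simp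
  have hJ1 : J 1 = I k m n := by
    rw [hJ_def, I]
    refine integral_congr_ae (Filter.Eventually.of_forall fun x => ?_)
    rw [hf_def]; simp
  rw [hI1, hJ1] at heq
  have : I k m (n + 1) = ((d : ℝ) + k) * I k m n := by linarith [heq]
  rw [this, hd_def]
  push_cast
  ring
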